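/- Let 0 ≤ α < ω₁, let (Xₙ : n ∈ ℕ) be a partition of a topological space X into functionally ambiguous sets of class α, let (fₙ) be mappings X → Y each having a σ-sfd base of functionally ambiguous sets of class α, and define f(x) = fₙ(x) for x ∈ Xₙ. Then f has a σ-sfd base of functionally ambiguous sets of class α. -/

import Mathlib

open Set Topology Ordinal

/-- A family of sets is discrete if every point has an open neighborhood
meeting at most one member of the family. -/
def DiscreteFam {X I : Type*} [TopologicalSpace X] (U : I → Set X) : Prop :=
  ∀ x : X, ∃ V : Set X, IsOpen V ∧ x ∈ V ∧
    ∀ i j : I, (V ∩ U i).Nonempty → (V ∩ U j).Nonempty → i = j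

/-- A set is functionally closed (a zero set) if it is the preimage of `{0}`
under a continuous real-valued function. -/
def FunClosed {X : Type*} [TopologicalSpace X] (F : Set X) : Prop :=
  ∃ f : X → ℝ, Continuous f ∧ F = f ⁻¹' {0}

/-- A set is functionally open if its complement is functionally closed. -/
def FunOpen {X : Type*} [TopologicalSpace X] (U : Set X) : Prop :=
  FunClosed Uᶜ

/-- The pair (α'th functionally multiplicative class, α'th functionally additive class),
defined by transfinite recursion. -/
noncomputable def FunClassPair (X : Type*) [TopologicalSpace X] (α : Ordinal) :
    Set (Set X) × Set (Set X) :=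
  if α = 0 then ({F | FunClosed F}, {U | FunOpen U})
  else
    ({ A | ∃ f : ℕ → Set X, (∀ n, ∃ β, ∃ _ : β < α, f n ∈ (FunClassPair X β).2) ∧ A = ⋂ n, f n },
     { A | ∃ f : ℕ → Set X, (∀ n, ∃ β, ∃ _ : β < α, f n ∈ (FunClassPair X β).1) ∧ A = ⋃ n, f n })
termination_by α

/-- The α'th functionally multiplicative class. -/
noncomputable def FunMul (X : Type*) [TopologicalSpace X] (α : Ordinal) : Set (Set X) :=
  (FunClassPair X α).1

/-- The α'th functionally additive class. -/
noncomputable def FunAdd (X : Type*) [TopologicalSpace X] (α : Ordinal) : Set (Set X) :=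
  (FunClassPair X α).2

/-- Functionally ambiguous sets of class α. -/
noncomputable def FunAmb {X : Type*} [TopologicalSpace X] (α : Ordinal) (A : Set X) : Prop :=
  A ∈ FunAdd X α ∧ A ∈ FunMul X α

/-- A family is strongly functionally discrete (sfd). -/
def SFDFam {X I : Type*} [TopologicalSpace X] (A : I → Set X) : Prop :=
  ∃ U : I → Set X, DiscreteFam U ∧ (∀ i, FunOpen (U i)) ∧ ∀ i, closure (A i) ⊆ U i

/-- A collection of sets is sfd (viewed as a family indexed by itself). -/
def SFDSet {X : Type*} [TopologicalSpace X] (𝒜 : Set (Set X)) : Prop :=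
  SFDFam (fun b : 𝒜 => (b : Set X))

/-- A collection of sets is a well sfd-family. -/
def WellSFDSet {X : Type*} [TopologicalSpace X] (𝒜 : Set (Set X)) : Prop :=
  ∃ U F : 𝒜 → Set X, DiscreteFam U ∧ DiscreteFam F ∧
    (∀ b, FunOpen (U b)) ∧ (∀ b, FunClosed (F b)) ∧
    ∀ b : 𝒜, (b : Set X) ⊆ F b ∧ F b ⊆ U b

/-- An indexed family is σ-sfd if the index set splits into countably many pieces
on each of which the family is sfd. -/
def SigmaSFDFam {X I : Type*} [TopologicalSpace X] (A : I → Set X) : Prop :=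
  ∃ J : ℕ → Set I, (∀ n, SFDFam (fun i : J n => A i)) ∧ (⋃ n, J n) = Set.univ

/-- `B` is a base for the mapping `f`: every preimage of an open set is a union
of members of `B`. -/
def IsBaseFor {X Y : Type*} [TopologicalSpace X] [TopologicalSpace Y]
    (B : Set (Set X)) (f : X → Y) : Prop :=
  ∀ V : Set Y, IsOpen V → ∃ S ⊆ B, f ⁻¹' V = ⋃₀ S

/-- `f` has a σ-strongly-functionally-discrete base. -/
def SigmaSFD {X Y : Type*} [TopologicalSpace X] [TopologicalSpace Y] (f : X → Y) : Prop :=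
  ∃ B : ℕ → Set (Set X), (∀ n, SFDSet (B n)) ∧ IsBaseFor (⋃ n, B n) f

/-- `f` has a σ-sfd base consisting of functionally ambiguous sets of class α. -/
noncomputable def SigmaSFDAmb {X Y : Type*} [TopologicalSpace X] [TopologicalSpace Y]
    (α : Ordinal) (f : X → Y) : Prop :=
  ∃ B : ℕ → Set (Set X), (∀ n, SFDSet (B n)) ∧ (∀ n, ∀ b ∈ B n, FunAmb α b) ∧
    IsBaseFor (⋃ n, B n) f

/-- `f` belongs to the α'th functionally Lebesgue class. -/
noncomputable def LebClass {X Y : Type*} [TopologicalSpace X] [TopologicalSpace Y]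
    (α : Ordinal) (f : X → Y) : Prop :=
  ∀ V : Set Y, IsOpen V → f ⁻¹' V ∈ FunAdd X α

/-- `Y` has a σ-disjoint base. -/
def SigmaDisjointBase (Y : Type*) [TopologicalSpace Y] : Prop :=
  ∃ V : ℕ → Set (Set Y), (∀ m, (V m).PairwiseDisjoint id) ∧
    TopologicalSpace.IsTopologicalBasis (⋃ m, V m)

section AuxLemmas
variable {X : Type*} [TopologicalSpace X]

lemma funMul_zero : FunMul X 0 = {F | FunClosed F} := by
  rw [FunMul, FunClassPair]; simp

lemma funAdd_zero : FunAdd X 0 = {U | FunOpen U} := by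
  rw [FunAdd, FunClassPair]; simp

lemma funMul_pos {α : Ordinal} (hα : α ≠ 0) {A : Set X} :
    A ∈ FunMul X α ↔ ∃ f : ℕ → Set X,
      (∀ n, ∃ β, ∃ _ : β < α, f n ∈ FunAdd X β) ∧ A = ⋂ n, f n := by
  rw [FunMul, FunClassPair, if_neg hα]; rfl

lemma funAdd_pos {α : Ordinal} (hα : α ≠ 0) {A : Set X} :
    A ∈ FunAdd X α ↔ ∃ f : ℕ → Set X,
      (∀ n, ∃ β, ∃ _ : β < α, f n ∈ FunMul X β) ∧ A = ⋃ n, f n := by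
  rw [FunAdd, FunClassPair, if_neg hα]; rfl
variable {X : Type*} [TopologicalSpace X]

lemma funClosed_inter {F G : Set X} (hF : FunClosed F) (hG : FunClosed G) :
    FunClosed (F ∩ G) := by
  obtain ⟨f, hf, rfl⟩ := hF
  obtain ⟨g, hg, rfl⟩ := hG
  refine ⟨fun x => |f x| + |g x|, by continuity, ?_⟩
  ext x
  simp only [mem_inter_iff, mem_preimage, mem_singleton_iff]
  rw [add_eq_zero_iff_of_nonneg (abs_nonneg _) (abs_nonneg _), abs_eq_zero, abs_eq_zero]

lemma funClosed_union {F G : Set X} (hF : FunClosed F) (hG : FunClosed G) :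
    FunClosed (F ∪ G) := by
  obtain ⟨f, hf, rfl⟩ := hF
  obtain ⟨g, hg, rfl⟩ := hG
  refine ⟨fun x => f x * g x, by continuity, ?_⟩
  ext x
  simp [mul_eq_zero]

lemma funOpen_inter {U V : Set X} (hU : FunOpen U) (hV : FunOpen V) :
    FunOpen (U ∩ V) := by
  rw [FunOpen, compl_inter]
  exact funClosed_union hU hV

/-- Zero set of `max ((n+1)⁻¹ - |f x|) 0` is `{x | (n+1)⁻¹ ≤ |f x|}`. -/
lemma funClosed_abs_ge (f : X → ℝ) (hf : Continuous f) (c : ℝ) (hc : 0 < c) :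
    FunClosed {x | c ≤ |f x|} := by
  refine ⟨fun x => max (c - |f x|) 0, by continuity, ?_⟩
  ext x
  simp [max_eq_right_iff, sub_nonpos]

lemma funOpen_eq_iUnion {U : Set X} (hU : FunOpen U) :
    ∃ F : ℕ → Set X, (∀ n, FunClosed (F n)) ∧ U = ⋃ n, F n := by
  obtain ⟨f, hf, hUc⟩ := hU
  refine ⟨fun n => {x | ((n:ℝ)+1)⁻¹ ≤ |f x|}, fun n =>
    funClosed_abs_ge f hf _ (by positivity), ?_⟩
  ext x
  have hx : x ∈ U ↔ f x ≠ 0 := by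
    rw [← not_iff_not]; simp [← mem_compl_iff, hUc]
  simp only [mem_iUnion, mem_setOf_eq, hx]
  constructor
  · intro h
    have hpos : 0 < |f x| := abs_pos.2 h
    obtain ⟨n, hn⟩ := exists_nat_one_div_lt hpos
    exact ⟨n, by rw [one_div] at hn; exact hn.le⟩
  · rintro ⟨n, hn⟩
    intro h0
    have hp : (0:ℝ) < ((n:ℝ)+1)⁻¹ := by positivity
    rw [h0, abs_zero] at hn; linarith

lemma funClosed_eq_iInter {F : Set X} (hF : FunClosed F) :
    ∃ G : ℕ → Set X, (∀ n, FunOpen (G n)) ∧ F = ⋂ n, G n := by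
  obtain ⟨f, hf, rfl⟩ := hF
  refine ⟨fun n => {x | ((n:ℝ)+1)⁻¹ ≤ |f x|}ᶜ, fun n => ?_, ?_⟩
  · rw [FunOpen, compl_compl]; exact funClosed_abs_ge f hf _ (by positivity)
  · ext x
    simp only [mem_preimage, mem_singleton_iff, mem_iInter, mem_compl_iff, mem_setOf_eq, not_le]
    constructor
    · intro h n; rw [h]; simp; positivity
    · intro h
      by_contra h0
      obtain ⟨n, hn⟩ := exists_nat_one_div_lt (abs_pos.2 h0)
      rw [one_div] at hn
      exact absurd (h n) (not_lt.2 hn.le)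
lemma funMul_mono {β β' : Ordinal} (h : β ≤ β') : FunMul X β ⊆ FunMul X β' := by
  rcases h.lt_or_eq with hlt | rfl
  · intro A hA
    have hβ' : β' ≠ 0 := fun h0 => ((zero_le (a := β)).not_gt (h0 ▸ hlt))
    rw [funMul_pos hβ']
    rcases eq_or_ne β 0 with rfl | hβ
    · rw [funMul_zero] at hA
      obtain ⟨G, hG, rfl⟩ := funClosed_eq_iInter hA
      exact ⟨G, fun n => ⟨0, hlt, by rw [funAdd_zero]; exact hG n⟩, rfl⟩
    · rw [funMul_pos hβ] at hA
      obtain ⟨g, hg, rfl⟩ := hA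
      refine ⟨g, fun n => ?_, rfl⟩
      obtain ⟨γ, hγ, hgn⟩ := hg n
      exact ⟨γ, hγ.trans hlt, hgn⟩
  · exact subset_rfl

lemma funAdd_mono {β β' : Ordinal} (h : β ≤ β') : FunAdd X β ⊆ FunAdd X β' := by
  rcases h.lt_or_eq with hlt | rfl
  · intro A hA
    have hβ' : β' ≠ 0 := fun h0 => ((zero_le (a := β)).not_gt (h0 ▸ hlt))
    rw [funAdd_pos hβ']
    rcases eq_or_ne β 0 with rfl | hβ
    · rw [funAdd_zero] at hA
      obtain ⟨G, hG, rfl⟩ := funOpen_eq_iUnion hA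
      exact ⟨G, fun n => ⟨0, hlt, by rw [funMul_zero]; exact hG n⟩, rfl⟩
    · rw [funAdd_pos hβ] at hA
      obtain ⟨g, hg, rfl⟩ := hA
      refine ⟨g, fun n => ?_, rfl⟩
      obtain ⟨γ, hγ, hgn⟩ := hg n
      exact ⟨γ, hγ.trans hlt, hgn⟩
  · exact subset_rfl

lemma funMul_inter {β : Ordinal} {A B : Set X} (hA : A ∈ FunMul X β)
    (hB : B ∈ FunMul X β) : A ∩ B ∈ FunMul X β := by
  rcases eq_or_ne β 0 with rfl | hβ
  · rw [funMul_zero] at *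
    exact funClosed_inter hA hB
  · rw [funMul_pos hβ] at *
    obtain ⟨g, hg, rfl⟩ := hA
    obtain ⟨k, hk, rfl⟩ := hB
    refine ⟨fun n => if Even n then g (n / 2) else k (n / 2), fun n => ?_, ?_⟩
    · by_cases hn : Even n <;> simp only [hn, if_true, if_false, if_neg, if_pos]
      · exact hg _
      · exact hk _
    · ext x
      simp only [mem_inter_iff, mem_iInter]
      constructor
      · rintro ⟨h1, h2⟩ n
        by_cases hn : Even n <;> simp [hn, h1 _, h2 _]
      · intro h
        constructor
        · intro n
          have := h (2 * n)
          simpa [Nat.even_iff, Nat.mul_div_cancel_left] using this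
        · intro n
          have := h (2 * n + 1)
          have hodd : ¬ Even (2 * n + 1) := by simp [Nat.even_add_one, parity_simps]
          simpa [hodd, Nat.mul_add_div, Nat.mul_div_cancel_left] using this

lemma funAdd_inter {α : Ordinal} {A B : Set X} (hA : A ∈ FunAdd X α)
    (hB : B ∈ FunAdd X α) : A ∩ B ∈ FunAdd X α := by
  rcases eq_or_ne α 0 with rfl | hα
  · rw [funAdd_zero] at *
    exact funOpen_inter hA hB
  · rw [funAdd_pos hα] at *
    obtain ⟨g, hg, rfl⟩ := hA
    obtain ⟨k, hk, rfl⟩ := hB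
    refine ⟨fun n => g (Nat.unpair n).1 ∩ k (Nat.unpair n).2, fun n => ?_, ?_⟩
    · obtain ⟨β, hβ, hgn⟩ := hg (Nat.unpair n).1
      obtain ⟨γ, hγ, hkn⟩ := hk (Nat.unpair n).2
      refine ⟨max β γ, max_lt hβ hγ, funMul_inter
        (funMul_mono (le_max_left _ _) hgn) (funMul_mono (le_max_right _ _) hkn)⟩
    · ext x
      simp only [mem_inter_iff, mem_iUnion]
      constructor
      · rintro ⟨⟨n, hn⟩, ⟨m, hm⟩⟩
        exact ⟨Nat.pair n m, by simp [Nat.unpair_pair, hn, hm]⟩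
      · rintro ⟨n, hn, hm⟩
        exact ⟨⟨_, hn⟩, ⟨_, hm⟩⟩

lemma funAmb_inter {α : Ordinal} {A B : Set X} (hA : FunAmb α A) (hB : FunAmb α B) :
    FunAmb α (A ∩ B) :=
  ⟨funAdd_inter hA.1 hB.1, funMul_inter hA.2 hB.2⟩
lemma sfdSet_image_inter {𝒜 : Set (Set X)} (h : SFDSet 𝒜) (P : Set X) :
    SFDSet ((fun b => b ∩ P) '' 𝒜) := by
  obtain ⟨U, hdisc, hopen, hcl⟩ := h
  have hpick : ∀ c : ↥((fun b => b ∩ P) '' 𝒜), ∃ b : 𝒜, (b : Set X) ∩ P = c := by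
    rintro ⟨c, b, hb, rfl⟩
    exact ⟨⟨b, hb⟩, rfl⟩
  choose pick hpick using hpick
  refine ⟨fun c => U (pick c), ?_, fun c => hopen _, fun c => ?_⟩
  · intro x
    obtain ⟨V, hVo, hxV, huniq⟩ := hdisc x
    refine ⟨V, hVo, hxV, fun i j hi hj => ?_⟩
    have := huniq _ _ hi hj
    exact Subtype.ext (by rw [← hpick i, ← hpick j, this])
  · calc closure (c : Set X) ⊆ closure (pick c : Set X) := by
          rw [← hpick c]; exact closure_mono inter_subset_left
      _ ⊆ U (pick c) := hcl _

end AuxLemmas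

theorem stmt10 {X Y : Type*} [TopologicalSpace X] [TopologicalSpace Y]
    (α : Ordinal) (hα : α < ω₁) (Xn : ℕ → Set X)
    (hdisj : Pairwise (Function.onFun Disjoint Xn)) (hcov : (⋃ n, Xn n) = Set.univ)
    (hamb : ∀ n, FunAmb α (Xn n))
    (fn : ℕ → X → Y) (hfn : ∀ n, SigmaSFDAmb α (fn n))
    (f : X → Y) (hfdef : ∀ n, ∀ x ∈ Xn n, f x = fn n x) :
    SigmaSFDAmb α f := by
  choose B h1 h2 h3 using hfn
  refine ⟨fun k => (fun b => b ∩ Xn (Nat.unpair k).1) ''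
      B (Nat.unpair k).1 (Nat.unpair k).2,
    fun k => sfdSet_image_inter (h1 _ _) _, ?_, ?_⟩
  · rintro k b ⟨s, hs, rfl⟩
    exact funAmb_inter (h2 _ _ _ hs) (hamb _)
  · intro V hV
    choose S hS1 hS2 using fun n => h3 n V hV
    refine ⟨⋃ n, (fun b => b ∩ Xn n) '' S n, ?_, ?_⟩
    · rintro t ht
      simp only [mem_iUnion, mem_image] at ht
      obtain ⟨n, s, hs, rfl⟩ := ht
      obtain ⟨Bm, ⟨m, rfl⟩, hsm⟩ := hS1 n hs
      simp only [mem_iUnion, mem_image]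
      exact ⟨Nat.pair n m, s, by simp [Nat.unpair_pair, hsm]⟩
    · ext x
      simp only [mem_preimage, mem_sUnion, mem_iUnion, mem_image]
      constructor
      · intro hx
        have : x ∈ ⋃ n, Xn n := hcov ▸ mem_univ x
        obtain ⟨n, hn⟩ := mem_iUnion.1 this
        have hfx : fn n x ∈ V := by rw [← hfdef n x hn]; exact hx
        have : x ∈ ⋃₀ S n := (hS2 n) ▸ hfx
        obtain ⟨s, hs, hxs⟩ := this
        exact ⟨s ∩ Xn n, ⟨n, s, hs, rfl⟩, hxs, hn⟩
      · rintro ⟨t, ⟨n, s, hs, rfl⟩, hxs, hxn⟩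
        have : x ∈ ⋃₀ S n := ⟨s, hs, hxs⟩
        rw [← hS2 n] at this
        rw [hfdef n x hxn]
        exact this
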